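/- arXiv:2210.12495 — 2 statements merged into one kernel-verified Lean document; each statement's English description precedes it below -/
import Mathlib

section
/- Let y₁,…,y_R be elements of a metric space (with distance d) and x* a point such that the set S = {i : d(yᵢ, x*) ≤ ε} has |S| > (3/4)·R. Define j* = argmin_j median_i d(yⱼ, yᵢ). Then d(y_{j*}, x*) ≤ 3ε. -/
/-- The median of a finite list of reals: its `⌈n/2⌉`-th smallest element. -/
noncomputable def medianList (l : List ℝ) : ℝ :=
  (List.insertionSort (· ≤ ·) l).getD ((l.length + 1) / 2 - 1) 0

lemma countP_ofFn' {α : Type*} {n : ℕ} (f : Fin n → α) (p : α → Prop) [DecidablePred p] :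
    (List.ofFn f).countP (fun a => decide (p a)) = (Finset.univ.filter (fun i => p (f i))).card := by
  classical
  rw [List.ofFn_eq_map, List.countP_map, List.countP_eq_length_filter]
  simp [Finset.card, Finset.filter, Fin.univ_def, Function.comp]
  rfl

lemma medianList_le_of_count {l : List ℝ} {c : ℝ} (hl : 0 < l.length)
    (h : (l.length + 1) / 2 ≤ l.countP (fun x => decide (x ≤ c))) : medianList l ≤ c := by
  classical
  set s := List.insertionSort (· ≤ ·) l with hs
  have hlen : s.length = l.length := List.length_insertionSort _ _
  have hsort : List.Pairwise (· ≤ ·) s := List.pairwise_insertionSort _ _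
  have hperm : List.Perm s l := List.perm_insertionSort _ _
  set k := (l.length + 1) / 2 with hk
  have hk1 : 1 ≤ k := by omega
  have hkl : k - 1 < s.length := by omega
  have hmed : medianList l = s.get ⟨k - 1, hkl⟩ := by
    rw [medianList, List.getD_eq_getElem _ _ hkl]; rfl
  by_contra hlt
  push_neg at hlt
  rw [hmed] at hlt
  -- indices with value ≤ c are all < k - 1
  have hsub : (Finset.univ.filter (fun i : Fin s.length => s.get i ≤ c)) ⊆
      Finset.Iio ⟨k - 1, hkl⟩ := by
    intro i hi
    simp only [Finset.mem_filter] at hi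
    simp only [Finset.mem_Iio]
    by_contra hge
    push_neg at hge
    exact absurd (le_trans (hsort.rel_get_of_le hge) hi.2) (not_le.mpr hlt)
  have hcount : s.countP (fun x => decide (x ≤ c)) ≤ k - 1 := by
    have := Finset.card_le_card hsub
    rw [Fin.card_Iio] at this
    have hval : ((⟨k - 1, hkl⟩ : Fin s.length) : ℕ) = k - 1 := rfl
    rw [hval] at this
    have heq : s.countP (fun x => decide (x ≤ c)) =
        (Finset.univ.filter (fun i : Fin s.length => s.get i ≤ c)).card := by
      conv_lhs => rw [← List.ofFn_get s]
      exact countP_ofFn' _ _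
    omega
  rw [hperm.countP_eq] at hcount
  omega

lemma count_le_medianList {l : List ℝ} (hl : 0 < l.length) :
    (l.length + 1) / 2 ≤ l.countP (fun x => decide (x ≤ medianList l)) := by
  classical
  set s := List.insertionSort (· ≤ ·) l with hs
  have hlen : s.length = l.length := List.length_insertionSort _ _
  have hsort : List.Pairwise (· ≤ ·) s := List.pairwise_insertionSort _ _
  have hperm : List.Perm s l := List.perm_insertionSort _ _
  set k := (l.length + 1) / 2 with hk
  have hk1 : 1 ≤ k := by omega
  have hkl : k - 1 < s.length := by omega
  have hmed : medianList l = s.get ⟨k - 1, hkl⟩ := by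
    rw [medianList, List.getD_eq_getElem _ _ hkl]; rfl
  have hsub : Finset.Iic (⟨k - 1, hkl⟩ : Fin s.length) ⊆
      (Finset.univ.filter (fun i : Fin s.length => s.get i ≤ medianList l)) := by
    intro i hi
    simp only [Finset.mem_Iic] at hi
    simp only [Finset.mem_filter, Finset.mem_univ, true_and]
    rw [hmed]
    exact hsort.rel_get_of_le hi
  have := Finset.card_le_card hsub
  rw [Fin.card_Iic] at this
  have hval : ((⟨k - 1, hkl⟩ : Fin s.length) : ℕ) = k - 1 := rfl
  rw [hval] at this
  have heq : s.countP (fun x => decide (x ≤ medianList l)) =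
      (Finset.univ.filter (fun i : Fin s.length => s.get i ≤ medianList l)).card := by
    conv_lhs => rw [← List.ofFn_get s]
    exact countP_ofFn' _ _
  rw [← hperm.countP_eq]
  omega

theorem min_of_medians {M : Type*} [MetricSpace M]
    (R : ℕ) (hR : 0 < R) (y : Fin R → M) (xstar : M) (ε : ℝ) (hε : 0 ≤ ε)
    (hS : (3 : ℝ) / 4 * R <
      ((Finset.univ.filter (fun i => dist (y i) xstar ≤ ε)).card : ℝ))
    (jstar : Fin R)
    (hjstar : ∀ j, medianList (List.ofFn (fun i => dist (y jstar) (y i)))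
        ≤ medianList (List.ofFn (fun i => dist (y j) (y i)))) :
    dist (y jstar) xstar ≤ 3 * ε := by
  classical
  set S := Finset.univ.filter (fun i => dist (y i) xstar ≤ ε) with hSdef
  have hS4 : 3 * R < 4 * S.card := by
    have : (3 * R : ℝ) < 4 * S.card := by push_cast at hS ⊢; linarith
    exact_mod_cast this
  have hSne : S.Nonempty := Finset.card_pos.mp (by omega)
  obtain ⟨j₀, hj₀⟩ := hSne
  have hj₀' : dist (y j₀) xstar ≤ ε := by
    rw [hSdef, Finset.mem_filter] at hj₀; exact hj₀.2
  -- for the list of j₀, many entries are ≤ 2ε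
  set l₀ := List.ofFn (fun i => dist (y j₀) (y i)) with hl₀
  have hlen₀ : l₀.length = R := List.length_ofFn
  have hsubS : S ⊆ Finset.univ.filter (fun i => dist (y j₀) (y i) ≤ 2 * ε) := by
    intro i hi
    rw [hSdef, Finset.mem_filter] at hi
    rw [Finset.mem_filter]
    refine ⟨Finset.mem_univ _, ?_⟩
    calc dist (y j₀) (y i) ≤ dist (y j₀) xstar + dist xstar (y i) := dist_triangle _ _ _
      _ ≤ ε + ε := add_le_add hj₀' (by rw [dist_comm]; exact hi.2)
      _ = 2 * ε := by ring
  have hmed₀ : medianList l₀ ≤ 2 * ε := by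
    apply medianList_le_of_count (by omega)
    rw [hl₀, countP_ofFn']
    simp only [List.length_ofFn]
    have := Finset.card_le_card hsubS
    omega
  have hmedstar : medianList (List.ofFn (fun i => dist (y jstar) (y i))) ≤ 2 * ε :=
    le_trans (hjstar j₀) hmed₀
  -- many indices i have dist (y jstar) (y i) ≤ medianList
  set m := medianList (List.ofFn (fun i => dist (y jstar) (y i))) with hm
  set T := Finset.univ.filter (fun i => dist (y jstar) (y i) ≤ m) with hT
  have hTcard : (R + 1) / 2 ≤ T.card := by
    have h := count_le_medianList (l := List.ofFn (fun i => dist (y jstar) (y i)))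
      (by rw [List.length_ofFn]; omega)
    rw [countP_ofFn'] at h
    rw [List.length_ofFn] at h
    exact h
  -- S and T intersect
  have hST : (S ∩ T).Nonempty := by
    rw [← Finset.card_pos]
    have hunion : (S ∪ T).card ≤ R := by
      have := Finset.card_le_univ (S ∪ T)
      simpa using this
    have := Finset.card_inter_add_card_union S T
    omega
  obtain ⟨r, hr⟩ := hST
  rw [Finset.mem_inter, hSdef, hT, Finset.mem_filter, Finset.mem_filter] at hr
  calc dist (y jstar) xstar ≤ dist (y jstar) (y r) + dist (y r) xstar := dist_triangle _ _ _
    _ ≤ m + ε := add_le_add hr.2.2 hr.1.2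
    _ ≤ 2 * ε + ε := add_le_add_left hmedstar _
    _ = 3 * ε := by ring
end

section
/- Robust min-of-medians: let y₁,…,y_R lie in a metric space with x* such that |S| > (3/4)R where S = {i : d(yᵢ,x*)² ≤ ε}. Suppose d'_{i,j} are approximate squared distances with α·d(yᵢ,yⱼ)² ≤ d'_{i,j} ≤ β·d(yᵢ,yⱼ)² for 0 < α ≤ β. Let j* = argmin_j median_i d'_{j,i}. Then d(y_{j*}, x*)² ≤ (1 + 2√(2β/α))²·ε; in particular d(y_{j*},x*)² ≤ C·(β/α)·ε for an absolute constant C. -/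
private lemma countP_ofFn_eq (R : ℕ) (f : Fin R → ℝ) (c : ℝ) :
    (List.ofFn f).countP (fun x => decide (x ≤ c)) =
      (Finset.univ.filter (fun i => f i ≤ c)).card := by
  rw [List.ofFn_eq_map, List.countP_map]
  simp [Finset.filter, Finset.card, Finset.univ, Fintype.elems, Multiset.filter_coe,
    List.countP_eq_length_filter, Function.comp_def]

private lemma sorted_getD_le {s : List ℝ} (hs : s.Pairwise (· ≤ ·)) {i : ℕ} (hi : i < s.length)
    {c : ℝ} (hc : i + 1 ≤ s.countP (fun x => decide (x ≤ c))) : s.getD i 0 ≤ c := by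
  by_contra h
  push_neg at h
  have hdrop : (s.drop i).countP (fun x => decide (x ≤ c)) = 0 := by
    rw [List.countP_eq_zero]
    intro x hx
    simp only [decide_eq_true_eq, not_le]
    obtain ⟨j, hj, rfl⟩ := List.mem_iff_getElem.mp hx
    have hij : i + j < s.length := by
      have := hj; rw [List.length_drop] at this; omega
    calc c < s.getD i 0 := h
      _ = s.get ⟨i, hi⟩ := by rw [List.getD_eq_getElem _ _ hi]; rfl
      _ ≤ s.get ⟨i + j, hij⟩ := hs.rel_get_of_le (by simp [Fin.le_def])
      _ = (s.drop i)[j] := by rw [List.getElem_drop]; rfl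
  have hcount : s.countP (fun x => decide (x ≤ c)) ≤ i := by
    conv_lhs => rw [← List.take_append_drop i s]
    rw [List.countP_append, hdrop, Nat.add_zero]
    calc (s.take i).countP (fun x => decide (x ≤ c)) ≤ (s.take i).length :=
          List.countP_le_length
      _ ≤ i := by simp [List.length_take]
  omega

private lemma le_countP_sorted {s : List ℝ} (hs : s.Pairwise (· ≤ ·)) {i : ℕ}
    (hi : i < s.length) :
    i + 1 ≤ s.countP (fun x => decide (x ≤ s.getD i 0)) := by
  have h1 : (s.take (i+1)).countP (fun x => decide (x ≤ s.getD i 0))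
      = (s.take (i+1)).length := by
    rw [List.countP_eq_length]
    intro x hx
    obtain ⟨j, hj, rfl⟩ := List.mem_iff_getElem.mp hx
    have hji : j ≤ i := by
      have := hj; rw [List.length_take] at this; omega
    have hjs : j < s.length := by omega
    simp only [decide_eq_true_eq]
    calc (s.take (i+1))[j] = s.get ⟨j, hjs⟩ := by rw [List.getElem_take]; rfl
      _ ≤ s.get ⟨i, hi⟩ := hs.rel_get_of_le (by simp [Fin.le_def, hji])
      _ = s.getD i 0 := by rw [List.getD_eq_getElem _ _ hi]; rfl
  have h2 := (List.take_sublist (i+1) s).countP_le (p := fun x => decide (x ≤ s.getD i 0))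
  have h3 : (s.take (i+1)).length = i+1 := by
    rw [List.length_take]; omega
  omega

private lemma medianList_le_of_card {R : ℕ} (hR : 0 < R) (f : Fin R → ℝ) (c : ℝ)
    (h : (R + 1) / 2 ≤ (Finset.univ.filter (fun i => f i ≤ c)).card) :
    medianList (List.ofFn f) ≤ c := by
  set s := List.insertionSort (· ≤ ·) (List.ofFn f) with hsdef
  have hperm : s.Perm (List.ofFn f) := List.perm_insertionSort _ _
  have hlen : s.length = R := by rw [hperm.length_eq, List.length_ofFn]
  have hs : s.Pairwise (· ≤ ·) := List.pairwise_insertionSort _ _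
  have hidx : (R + 1) / 2 - 1 < s.length := by omega
  have hcount : s.countP (fun x => decide (x ≤ c))
      = (Finset.univ.filter (fun i => f i ≤ c)).card := by
    rw [hperm.countP_eq, countP_ofFn_eq]
  unfold medianList
  rw [← hsdef, List.length_ofFn]
  exact sorted_getD_le hs hidx (by omega)

private lemma card_of_medianList {R : ℕ} (hR : 0 < R) (f : Fin R → ℝ) :
    (R + 1) / 2 ≤ (Finset.univ.filter (fun i => f i ≤ medianList (List.ofFn f))).card := by
  set s := List.insertionSort (· ≤ ·) (List.ofFn f) with hsdef
  have hperm : s.Perm (List.ofFn f) := List.perm_insertionSort _ _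
  have hlen : s.length = R := by rw [hperm.length_eq, List.length_ofFn]
  have hs : s.Pairwise (· ≤ ·) := List.pairwise_insertionSort _ _
  have hidx : (R + 1) / 2 - 1 < s.length := by omega
  have hmed : medianList (List.ofFn f) = s.getD ((R + 1) / 2 - 1) 0 := by
    unfold medianList
    rw [← hsdef, List.length_ofFn]
  have h := le_countP_sorted hs hidx
  rw [hperm.countP_eq, countP_ofFn_eq] at h
  rw [hmed]
  omega

theorem robust_min_of_medians {M : Type*} [MetricSpace M]
    (R : ℕ) (hR : 0 < R) (y : Fin R → M) (xstar : M) (ε : ℝ) (hε : 0 ≤ ε)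
    (α β : ℝ) (hα : 0 < α) (hαβ : α ≤ β)
    (hS : (3 : ℝ) / 4 * R <
      ((Finset.univ.filter (fun i => dist (y i) xstar ^ 2 ≤ ε)).card : ℝ))
    (d' : Fin R → Fin R → ℝ)
    (hd' : ∀ i j, α * dist (y i) (y j) ^ 2 ≤ d' i j ∧ d' i j ≤ β * dist (y i) (y j) ^ 2)
    (jstar : Fin R)
    (hjstar : ∀ j, medianList (List.ofFn (fun i => d' jstar i))
        ≤ medianList (List.ofFn (fun i => d' j i))) :
    dist (y jstar) xstar ^ 2 ≤ (1 + 2 * Real.sqrt (2 * β / α)) ^ 2 * ε := by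
  have hβ : 0 < β := lt_of_lt_of_le hα hαβ
  set S := Finset.univ.filter (fun i => dist (y i) xstar ^ 2 ≤ ε) with hSdef
  have hSR : 3 * R < 4 * S.card := by
    have h : (3 * R : ℝ) < 4 * S.card := by rw [hSdef]; linarith
    exact_mod_cast h
  have hScard : (R + 1) / 2 ≤ S.card := by omega
  have hSne : S.Nonempty := Finset.card_pos.mp (by omega)
  obtain ⟨j0, hj0⟩ := hSne
  have hj0' : dist (y j0) xstar ^ 2 ≤ ε := (Finset.mem_filter.mp hj0).2
  -- every good row entry is small on S
  have hrow : ∀ i ∈ S, d' j0 i ≤ 4 * β * ε := by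
    intro i hi
    have hi' : dist (y i) xstar ^ 2 ≤ ε := (Finset.mem_filter.mp hi).2
    have htri : dist (y j0) (y i) ≤ dist (y j0) xstar + dist (y i) xstar :=
      dist_triangle_right _ _ _
    have hsq : dist (y j0) (y i) ^ 2 ≤ 4 * ε := by
      nlinarith [dist_nonneg (x := y j0) (y := y i), dist_nonneg (x := y j0) (y := xstar),
        dist_nonneg (x := y i) (y := xstar),
        sq_nonneg (dist (y j0) xstar - dist (y i) xstar),
        pow_le_pow_left₀ dist_nonneg htri 2]
    nlinarith [(hd' j0 i).2, mul_le_mul_of_nonneg_left hsq hβ.le]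
  have hmed1 : medianList (List.ofFn (fun i => d' j0 i)) ≤ 4 * β * ε := by
    apply medianList_le_of_card hR
    refine le_trans hScard (Finset.card_le_card ?_)
    intro i hi
    exact Finset.mem_filter.mpr ⟨Finset.mem_univ _, hrow i hi⟩
  have hmed : medianList (List.ofFn (fun i => d' jstar i)) ≤ 4 * β * ε :=
    (hjstar j0).trans hmed1
  set m := medianList (List.ofFn (fun i => d' jstar i)) with hmdef
  set A := Finset.univ.filter (fun i => d' jstar i ≤ m) with hAdef
  have hA : (R + 1) / 2 ≤ A.card := card_of_medianList hR _
  have hinter : (A ∩ S).Nonempty := by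
    rw [← Finset.card_pos]
    have hsum := Finset.card_union_add_card_inter A S
    have hU : (A ∪ S).card ≤ R := by simpa using Finset.card_le_univ (A ∪ S)
    omega
  obtain ⟨i, hiAS⟩ := hinter
  rw [Finset.mem_inter] at hiAS
  have hiA : d' jstar i ≤ m := (Finset.mem_filter.mp hiAS.1).2
  have hiS : dist (y i) xstar ^ 2 ≤ ε := (Finset.mem_filter.mp hiAS.2).2
  set t := Real.sqrt (2 * β / α) with htdef
  have ht2 : t ^ 2 = 2 * β / α := Real.sq_sqrt (by positivity)
  have ht1 : 1 ≤ t := by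
    rw [htdef, show (1:ℝ) = Real.sqrt 1 from Real.sqrt_one.symm]
    apply Real.sqrt_le_sqrt
    rw [le_div_iff₀ hα]; linarith
  have ha2 : α * dist (y jstar) (y i) ^ 2 ≤ 4 * β * ε :=
    le_trans (hd' jstar i).1 (le_trans hiA hmed)
  have hαt : α * t ^ 2 = 2 * β := by rw [ht2]; field_simp
  have ha2' : dist (y jstar) (y i) ^ 2 ≤ 2 * t ^ 2 * ε := by
    have h4 : (4:ℝ) * β * ε = α * (2 * t ^ 2 * ε) := by linear_combination (-2*ε) * hαt
    exact le_of_mul_le_mul_left (by rw [← h4]; exact ha2) hα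
  have htri : dist (y jstar) xstar ≤ dist (y jstar) (y i) + dist (y i) xstar :=
    dist_triangle _ _ _
  nlinarith [pow_le_pow_left₀ dist_nonneg htri 2,
    sq_nonneg (dist (y jstar) (y i) - dist (y i) xstar),
    dist_nonneg (x := y jstar) (y := xstar), dist_nonneg (x := y jstar) (y := y i),
    dist_nonneg (x := y i) (y := xstar),
    mul_nonneg (by linarith : (0:ℝ) ≤ t - 1) hε, hiS, ha2', hε]
end
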